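/- If $(1-\gamma)\kappa_\pi < 1$, then the discounted fundamental matrix satisfies $Z_{\pi,\gamma} = [I - M_\pi D_\pi^{-1} + E(Z_{\pi,\gamma})_{\mathrm{dg}} - (1-\gamma) E (Z_{\pi,\gamma} M_\pi)_{\mathrm{dg}} D_\pi^{-1}] (I - (1-\gamma) M_\pi D_\pi^{-1})^{-1}$. -/

import Mathlib

open Matrix

/-- If `(1-γ)κ < 1`, the discounted fundamental matrix satisfies
`Z = [I - M D⁻¹ + E (Z)_dg - (1-γ) E (Z M)_dg D⁻¹] (I - (1-γ) M D⁻¹)⁻¹`. -/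
theorem stmt9 {n : ℕ} (P M : Matrix (Fin n) (Fin n) ℝ) (d : Fin n → ℝ) (κ γ : ℝ)
    (hP_nonneg : ∀ i j, 0 ≤ P i j) (hP_row : ∀ i, ∑ j, P i j = 1)
    (hd_pos : ∀ i, 0 < d i) (hd_sum : ∑ i, d i = 1)
    (hd_stat : Matrix.vecMul d P = d)
    (hM_diag : ∀ i, M i i = (d i)⁻¹)
    (hM_eq : M = P * (M - Matrix.diagonal (fun i => (d i)⁻¹))
        + Matrix.of (fun _ _ : Fin n => (1 : ℝ)))
    (hκ : ∀ i, ∑ j, d j * M i j = κ)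
    (hγ0 : 0 < γ) (hγ1 : γ ≤ 1)
    (hZInv : IsUnit (1 - γ • P + γ • Matrix.vecMulVec (fun _ => (1 : ℝ)) d))
    (h : (1 - γ) * κ < 1)
    (Z : Matrix (Fin n) (Fin n) ℝ)
    (hZ : Z = (1 - γ • P + γ • Matrix.vecMulVec (fun _ => (1 : ℝ)) d)⁻¹) :
    Z = (1 - M * (Matrix.diagonal fun i => (d i)⁻¹)⁻¹
          + Matrix.of (fun _ _ : Fin n => (1 : ℝ)) * Matrix.diagonal (fun i => Z i i)
          - (1 - γ) • (Matrix.of (fun _ _ : Fin n => (1 : ℝ))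
            * Matrix.diagonal (fun i => (Z * M) i i)
            * (Matrix.diagonal fun i => (d i)⁻¹)⁻¹))
        * (1 - (1 - γ) • (M * (Matrix.diagonal fun i => (d i)⁻¹)⁻¹))⁻¹ := by
  classical
  set W : Matrix (Fin n) (Fin n) ℝ := Matrix.vecMulVec (fun _ => (1:ℝ)) d with hWdef
  set A : Matrix (Fin n) (Fin n) ℝ := 1 - γ • P + γ • W with hAdef
  set E : Matrix (Fin n) (Fin n) ℝ := Matrix.of (fun _ _ : Fin n => (1:ℝ)) with hEdef
  set Dd : Matrix (Fin n) (Fin n) ℝ := Matrix.diagonal d with hDd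
  have hdetA : IsUnit A.det := (Matrix.isUnit_iff_isUnit_det A).mp hZInv
  have hZA : Z * A = 1 := by rw [hZ]; exact Matrix.nonsing_inv_mul A hdetA
  have hAZ : A * Z = 1 := by rw [hZ]; exact Matrix.mul_nonsing_inv A hdetA
  have hDinv : (Matrix.diagonal (fun i => (d i)⁻¹))⁻¹ = Dd := by
    apply Matrix.inv_eq_right_inv
    rw [hDd, Matrix.diagonal_mul_diagonal]
    convert Matrix.diagonal_one with i
    exact inv_mul_cancel₀ (hd_pos i).ne'
  have hArow : ∀ i, ∑ k, A i k = 1 := by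
    intro i
    simp only [hAdef, hWdef, Matrix.add_apply, Matrix.sub_apply, Matrix.smul_apply,
      Matrix.one_apply, Matrix.vecMulVec_apply, smul_eq_mul, one_mul]
    rw [Finset.sum_add_distrib, Finset.sum_sub_distrib, ← Finset.mul_sum, ← Finset.mul_sum,
      hP_row i, hd_sum]
    simp
  have hAev : ∀ w : Fin n → ℝ, A * Matrix.vecMulVec (fun _ => (1:ℝ)) w
      = Matrix.vecMulVec (fun _ => (1:ℝ)) w := by
    intro w
    ext i j
    simp only [Matrix.mul_apply, Matrix.vecMulVec_apply, one_mul]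
    rw [← Finset.sum_mul, hArow i, one_mul]
  have hZev : ∀ w : Fin n → ℝ, Z * Matrix.vecMulVec (fun _ => (1:ℝ)) w
      = Matrix.vecMulVec (fun _ => (1:ℝ)) w := by
    intro w
    conv_lhs => rw [← hAev w, ← mul_assoc, hZA, one_mul]
  -- definitions
  set N : Matrix (Fin n) (Fin n) ℝ := M * Dd with hNdef
  set v : Fin n → ℝ := fun j => (∑ k, d k * M k j) * d j with hvdef
  set X : Matrix (Fin n) (Fin n) ℝ := Matrix.vecMulVec (fun _ => (1:ℝ)) v with hXdef
  have hPM : P * M = M - E + P * Matrix.diagonal (fun i => (d i)⁻¹) := by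
    rw [mul_sub] at hM_eq
    nth_rewrite 2 [hM_eq]
    abel
  have hED : E * Dd = W := by
    ext i j
    simp [hEdef, hWdef, hDd, Matrix.mul_diagonal, Matrix.vecMulVec_apply]
  have hPDD : P * Matrix.diagonal (fun i => (d i)⁻¹) * Dd = P := by
    rw [mul_assoc, hDd, Matrix.diagonal_mul_diagonal]
    have hfun : (fun i => (d i)⁻¹ * d i) = (fun _ => (1:ℝ)) :=
      funext fun i => inv_mul_cancel₀ (hd_pos i).ne'
    rw [hfun, Matrix.diagonal_one, mul_one]
  have hNapp : ∀ k j, N k j = M k j * d j := fun k j => by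
    rw [hNdef, hDd, Matrix.mul_diagonal]
  have hWN : W * N = X := by
    ext i j
    simp only [hWdef, hXdef, Matrix.mul_apply, Matrix.vecMulVec_apply, one_mul, hNapp, hvdef]
    rw [Finset.sum_mul]
    exact Finset.sum_congr rfl fun k _ => by ring
  have hPN : P * N = N - W + P := by
    rw [hNdef, ← mul_assoc, hPM, add_mul, sub_mul, hED, hPDD]
  have hAN : A * N = (1-γ) • N + (A - 1) + γ • X := by
    have expand : A * N = N - γ • (P * N) + γ • X := by
      rw [hAdef, add_mul, sub_mul, one_mul, Matrix.smul_mul, Matrix.smul_mul, hWN]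
    rw [expand, hPN, hAdef]
    module
  set B : Matrix (Fin n) (Fin n) ℝ := 1 - (1-γ) • N with hBdef
  set C : Matrix (Fin n) (Fin n) ℝ := 1 - N + γ • X with hCdef
  have hZX : Z * X = X := by rw [hXdef]; exact hZev v
  have hNid : N = (1-γ) • (Z * N) + 1 - Z + γ • X := by
    calc N = Z * (A * N) := by rw [← mul_assoc, hZA, one_mul]
    _ = Z * ((1-γ) • N + (A - 1) + γ • X) := by rw [hAN]
    _ = (1-γ) • (Z * N) + (Z * A - Z) + γ • (Z * X) := by
        rw [mul_add, mul_add, Matrix.mul_smul, Matrix.mul_smul, mul_sub, mul_one]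
    _ = (1-γ) • (Z * N) + 1 - Z + γ • X := by rw [hZA, hZX]; abel
  have hZB' : Z - (1-γ) • (Z * N) = C := by
    calc Z - (1-γ) • (Z*N) = 1 - ((1-γ) • (Z * N) + 1 - Z + γ • X) + γ • X := by abel
    _ = 1 - N + γ • X := by rw [← hNid]
  have hZB : Z * B = C := by
    rw [hBdef, mul_sub, mul_one, Matrix.mul_smul, hZB']
  have hdg : ∀ j, γ * v j = Z j j - (1-γ) * ((Z*M) j j * d j) := by
    intro j
    have h1 := congrArg (fun Q : Matrix (Fin n) (Fin n) ℝ => Q j j) hZB'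
    simp only [hCdef, Matrix.sub_apply, Matrix.add_apply, Matrix.smul_apply, smul_eq_mul,
      Matrix.one_apply_eq, hXdef, Matrix.vecMulVec_apply, one_mul] at h1
    have hZNjj : (Z * N) j j = (Z*M) j j * d j := by
      rw [hNdef, ← mul_assoc, hDd, Matrix.mul_diagonal]
    have hNjj : N j j = 1 := by
      rw [hNapp j j, hM_diag j, inv_mul_cancel₀ (hd_pos j).ne']
    rw [hZNjj, hNjj] at h1
    linarith
  have hbracket : 1 - N + E * Matrix.diagonal (fun i => Z i i)
      - (1-γ) • (E * Matrix.diagonal (fun i => (Z*M) i i) * Dd) = C := by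
    ext i j
    have hj := hdg j
    simp only [hCdef, hXdef, Matrix.sub_apply, Matrix.add_apply, Matrix.smul_apply,
      smul_eq_mul, Matrix.vecMulVec_apply, one_mul, hDd, Matrix.mul_diagonal,
      hEdef, Matrix.of_apply]
    rw [hNapp i j]
    linear_combination -hj
  -- sum of v is κ
  have hsumv : ∑ j, v j = κ := by
    simp only [hvdef]
    calc ∑ j, (∑ k, d k * M k j) * d j = ∑ j, ∑ k, d k * (d j * M k j) := by
          refine Finset.sum_congr rfl fun j _ => ?_
          rw [Finset.sum_mul]
          exact Finset.sum_congr rfl fun k _ => by ring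
    _ = ∑ k, ∑ j, d k * (d j * M k j) := Finset.sum_comm
    _ = ∑ k, d k * κ := by
          refine Finset.sum_congr rfl fun k _ => ?_
          rw [← Finset.mul_sum, hκ k]
    _ = κ := by rw [← Finset.sum_mul, hd_sum, one_mul]
  have hXX : X * X = κ • X := by
    ext i j
    simp only [hXdef, Matrix.mul_apply, Matrix.vecMulVec_apply, one_mul, Matrix.smul_apply,
      smul_eq_mul]
    rw [← Finset.sum_mul, hsumv]
  set c : ℝ := (1-γ)/(1-(1-γ)*κ) with hcdef
  have hden : 1 - (1-γ)*κ ≠ 0 := ne_of_gt (by linarith)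
  set R : Matrix (Fin n) (Fin n) ℝ := 1 - (1-γ) • X with hRdef
  have hc : c - (1-γ) - (1-γ)*c*κ = 0 := by
    rw [hcdef]
    field_simp
    ring
  have hRinv : R * (1 + c • X) = 1 := by
    have expand : R * (1 + c • X) = 1 + (c - (1-γ) - (1-γ)*c*κ) • X := by
      rw [hRdef]
      simp only [mul_add, sub_mul, one_mul, mul_one, Matrix.smul_mul, Matrix.mul_smul, hXX,
        smul_smul]
      module
    rw [expand, hc, zero_smul, add_zero]
  have hRunit : IsUnit R := by
    apply (Matrix.isUnit_iff_isUnit_det R).mpr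
    exact IsUnit.of_mul_eq_one _ (by rw [← Matrix.det_mul, hRinv, Matrix.det_one])
  have hAX : A * X = X := by rw [hXdef]; exact hAev v
  have hLB : (A - (1-γ)•1) * B = γ • (A * R) := by
    rw [hBdef, hRdef]
    simp only [mul_sub, sub_mul, mul_one, one_mul, Matrix.mul_smul, Matrix.smul_mul, hAX, hAN]
    module
  have hγunit : IsUnit (γ • (1 : Matrix (Fin n) (Fin n) ℝ)) := by
    apply (Matrix.isUnit_iff_isUnit_det _).mpr
    rw [Matrix.det_smul, Matrix.det_one, mul_one]
    exact isUnit_iff_ne_zero.mpr (pow_ne_zero _ hγ0.ne')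
  have hUunit : IsUnit ((A - (1-γ)•1) * B) := by
    rw [hLB, show γ • (A * R) = (γ • 1) * (A * R) from by rw [Matrix.smul_mul, one_mul]]
    exact hγunit.mul (hZInv.mul hRunit)
  have hBunit : IsUnit B := by
    obtain ⟨u, hu⟩ := hUunit
    have hleft : ((↑u⁻¹ : Matrix (Fin n) (Fin n) ℝ) * (A - (1-γ)•1)) * B = 1 := by
      rw [mul_assoc, ← hu, Units.inv_mul]
    apply (Matrix.isUnit_iff_isUnit_det B).mpr
    have hdet := congrArg Matrix.det hleft
    rw [Matrix.det_mul, Matrix.det_one] at hdet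
    exact IsUnit.of_mul_eq_one _ (by rw [mul_comm]; exact hdet)
  have hBdet : IsUnit B.det := (Matrix.isUnit_iff_isUnit_det B).mp hBunit
  have final : Z = C * B⁻¹ := by
    rw [← hZB, mul_assoc, Matrix.mul_nonsing_inv B hBdet, mul_one]
  rw [hDinv, ← hNdef, ← hBdef, hbracket]
  exact final
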